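/- For every rooted tree t with pairwise distinct leaf labels, every set S of labels, and every vertex v of t, the vertex v is complete with respect to S if and only if L(v) ⊆ S; that is, counter_S(v) = |L(v)| if and only if every leaf label in the subtree rooted at v belongs to S. -/

import Mathlib

inductive RTree (α : Type*) where
  | leaf (a : α)
  | node (children : List (RTree α))

namespace RTree

variable {α : Type*} [DecidableEq α]

/-- The list of leaf labels of a tree. -/
def leafList : RTree α → List α
  | leaf a => [a]
  | node cs => (cs.attach.map fun ⟨w, _⟩ => leafList w).flatten
decreasing_by have := List.sizeOf_lt_of_mem ‹_›; simp only [node.sizeOf_spec]; omega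

/-- `L v` is the finite set of labels of leaves in the subtree rooted at `v`. -/
def L (v : RTree α) : Finset α := (leafList v).toFinset

/-- The counter function. -/
def counter (S : Finset α) : RTree α → ℕ
  | leaf a => if a ∈ S then 1 else 0
  | node cs =>
      (cs.attach.map fun ⟨w, _⟩ =>
        if counter S w = (L w).card then counter S w else 0).sum
decreasing_by have := List.sizeOf_lt_of_mem ‹_›; simp only [node.sizeOf_spec]; omega

/-- `IsVertex v t` means that `v` is a vertex (subtree) of `t`. -/
inductive IsVertex : RTree α → RTree α → Prop
  | refl (t : RTree α) : IsVertex t t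
  | child {v w : RTree α} {cs : List (RTree α)} : w ∈ cs → IsVertex v w → IsVertex v (node cs)

/-- The list of all vertices (subtrees) of a tree. -/
def vertexList : RTree α → List (RTree α)
  | leaf a => [leaf a]
  | node cs => node cs :: (cs.attach.map fun ⟨w, _⟩ => vertexList w).flatten
decreasing_by have := List.sizeOf_lt_of_mem ‹_›; simp only [node.sizeOf_spec]; omega



omit [DecidableEq α] in
lemma leafList_node (cs : List (RTree α)) :
    leafList (node cs) = (cs.map leafList).flatten := by
  rw [leafList]
  congr 1
  exact List.attach_map_val (l := cs) (f := leafList)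

omit [DecidableEq α] in
lemma sublist_of_isVertex {v t : RTree α} (h : IsVertex v t) :
    List.Sublist (leafList v) (leafList t) := by
  induction h with
  | refl => exact List.Sublist.refl _
  | child hmem _ ih =>
    refine ih.trans ?_
    rw [leafList_node]
    exact List.sublist_flatten_of_mem (List.mem_map_of_mem (f := leafList) hmem)

lemma counter_le_filter (S : Finset α) (v : RTree α) :
    counter S v ≤ ((leafList v).filter (· ∈ S)).length := by
  match v with
  | leaf a =>
    rw [counter, leafList]
    split <;> simp_all
  | node cs =>
    rw [counter, leafList_node, List.filter_flatten]
    rw [List.length_flatten]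
    calc (cs.attach.map fun ⟨w, _⟩ =>
        if counter S w = (L w).card then counter S w else 0).sum
        ≤ (cs.attach.map fun ⟨w, _⟩ => ((leafList w).filter (· ∈ S)).length).sum := by
          apply List.sum_le_sum
          intro q hq
          obtain ⟨w, hw⟩ := q
          have := counter_le_filter S w
          show (if counter S w = (L w).card then counter S w else 0) ≤
            ((leafList w).filter (· ∈ S)).length
          split <;> omega
      _ = _ := by
          rw [List.attach_map_val (l := cs) (f := fun w => ((leafList w).filter (· ∈ S)).length)]
          rw [List.map_map, List.map_map]
          rfl
decreasing_by have := List.sizeOf_lt_of_mem hw; simp only [node.sizeOf_spec]; omega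

lemma counter_of_subset (S : Finset α) (v : RTree α) (hnd : (leafList v).Nodup)
    (h : L v ⊆ S) : counter S v = (L v).card := by
  match v with
  | leaf a =>
    have : a ∈ S := h (by simp [L, leafList])
    simp [counter, L, leafList, this]
  | node cs =>
    rw [counter]
    have hnd' : ∀ w ∈ cs, (leafList w).Nodup := by
      intro w hw
      refine List.Nodup.sublist ?_ hnd
      rw [leafList_node]
      exact List.sublist_flatten_of_mem (List.mem_map_of_mem (f := leafList) hw)
    have hsub : ∀ w ∈ cs, L w ⊆ S := by
      intro w hw
      refine subset_trans ?_ h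
      intro x hx
      simp only [L, List.mem_toFinset] at hx ⊢
      rw [leafList_node]
      exact List.mem_flatten.2 ⟨leafList w, List.mem_map_of_mem (f := leafList) hw, hx⟩
    have heach : ∀ q : {w // w ∈ cs}, counter S q.1 = (L q.1).card :=
      fun ⟨w, hw⟩ => counter_of_subset S w (hnd' w hw) (hsub w hw)
    have hcard : ∀ w ∈ cs, (L w).card = (leafList w).length := by
      intro w hw
      simp [L, List.toFinset_card_of_nodup (hnd' w hw)]
    calc (cs.attach.map fun ⟨w, _⟩ =>
        if counter S w = (L w).card then counter S w else 0).sum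
        = (cs.attach.map fun ⟨w, _⟩ => (leafList w).length).sum := by
          apply congrArg
          apply List.map_congr_left
          intro q hq
          obtain ⟨w, hw⟩ := q
          show (if counter S w = (L w).card then counter S w else 0) = (leafList w).length
          rw [if_pos (heach ⟨w, hw⟩), heach ⟨w, hw⟩, hcard w hw]
      _ = (L (node cs)).card := by
          rw [List.attach_map_val (l := cs) (f := fun w => (leafList w).length)]
          have hc : (L (node cs)).card = (leafList (node cs)).length := by
            simp [L, List.toFinset_card_of_nodup hnd]
          rw [hc, leafList_node, List.length_flatten, List.map_map]
          rfl
decreasing_by have := List.sizeOf_lt_of_mem hw; simp only [node.sizeOf_spec]; omega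

/-- a vertex `v` is complete with respect to `S` iff `L(v) ⊆ S`;
i.e. `counter_S(v) = |L(v)|` iff every leaf label in the subtree rooted at `v` is in `S`. -/
theorem counter_eq_card_iff_subset (t : RTree α) (hnd : t.leafList.Nodup)
    (S : Finset α) (v : RTree α) (hv : IsVertex v t) :
    counter S v = (L v).card ↔ L v ⊆ S := by

  have hndv : (leafList v).Nodup := (sublist_of_isVertex hv).nodup hnd
  constructor
  · intro heq
    have h1 := counter_le_filter S v
    have h2 : (L v).card = (leafList v).length := by
      simp [L, List.toFinset_card_of_nodup hndv]
    have h3 : ((leafList v).filter (· ∈ S)).length ≤ (leafList v).length :=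
      List.length_filter_le _ _
    have h4 : ((leafList v).filter (· ∈ S)).length = (leafList v).length := by omega
    have h5 : ∀ x ∈ leafList v, x ∈ S := by
      intro x hx
      have := (List.length_filter_eq_length_iff.mp h4) x hx
      simpa using this
    intro x hx
    exact h5 x (by simpa [L, List.mem_toFinset] using hx)
  · exact counter_of_subset S v hndv

end RTree
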